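/- Let Δ be the rectangle of width c and height d with boundary data μ₁ = (c) (a single part c on the bottom edge) and ν₂ = (d) (a single part d on the right edge), and arbitrary partitions μ₂ of c on the top edge and ν₁ of d on the left edge. Suppose γ is a λ-increasing lattice path from (0,d) to (c,0) in Δ with mult(γ) ≠ 0, and γ′ is a lattice path (possibly γ′ = γ) such that either γ ≺_R γ′ and mult₊(γ′) ≠ 0, or γ ≺_L γ′ and mult₋(γ′) ≠ 0. Then γ′ contains no lattice point in the relative interior of the right edge {c}×[0,d] of Δ and no lattice point in the relative interior of the bottom edge [0,c]×{0} of Δ. -/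

import Mathlib

open Classical

noncomputable section

namespace TropPaths

/-- Lattice points of the plane. -/
abbrev Pt := ℤ × ℤ

/-- The order on `ℤ²` induced by `λ(x,y) = x - εy` for a small irrational `ε > 0`:
`p ≺ q` iff `p₁ < q₁`, or (`p₁ = q₁` and `p₂ > q₂`). -/
def lamLT (p q : Pt) : Prop := p.1 < q.1 ∨ (p.1 = q.1 ∧ q.2 < p.2)

/-- A lattice path, recorded as the list of its points, is `λ`-increasing. -/
def Increasing (γ : List Pt) : Prop := List.Chain' lamLT γ

/-- The determinant of two vectors in `ℤ²`. -/
def det (u v : Pt) : ℤ := u.1 * v.2 - u.2 * v.1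

/-- The `k`-th point of a path (junk value out of range). -/
def pt (γ : List Pt) (k : ℕ) : Pt := γ.getD k (0, 0)

/-- The `k`-th step vector of a path. -/
def stepAt (γ : List Pt) (k : ℕ) : Pt := pt γ (k + 1) - pt γ k

/-- The list of all step vectors of a path. -/
def steps (γ : List Pt) : List Pt := List.zipWith (fun a b => b - a) γ γ.tail

/-- The multiset of down steps `(0,-s)`, `s > 0`, of a path. -/
def downSteps (γ : List Pt) : Multiset Pt :=
  Multiset.filter (fun v => v.1 = 0 ∧ v.2 < 0) (steps γ : Multiset Pt)

/-- The multiset of up-right steps of a path. -/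
def upRightSteps (γ : List Pt) : Multiset Pt :=
  Multiset.filter (fun v => 0 < v.1 ∧ 0 < v.2) (steps γ : Multiset Pt)

/-- The path makes a turn of sign `s` at the (interior) index `k`; for left turns
`s = (0 < ·)`, for right turns `s = (· < 0)`. -/
def TurnAt (s : ℤ → Prop) (γ : List Pt) (k : ℕ) : Prop :=
  0 < k ∧ k + 1 < γ.length ∧ s (det (pt γ k - pt γ (k - 1)) (pt γ (k + 1) - pt γ k))

/-- `k` is the first turn of sign `s` of the path. -/
def FirstTurn (s : ℤ → Prop) (γ : List Pt) (k : ℕ) : Prop :=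
  TurnAt s γ k ∧ ∀ j, TurnAt s γ j → k ≤ j

/-- Twice the area of the triangle with vertices `γ(k-1), γ(k), γ(k+1)`. -/
def triArea2 (γ : List Pt) (k : ℕ) : ℕ :=
  (det (pt γ k - pt γ (k - 1)) (pt γ (k + 1) - pt γ k)).natAbs

/-- The path obtained by cutting the corner at index `k`, i.e. deleting the point `γ(k)`. -/
def cut (γ : List Pt) (k : ℕ) : List Pt := γ.eraseIdx k

/-- The path obtained by completing the parallelogram at index `k`, i.e. replacing
`γ(k)` by `γ(k-1) + γ(k+1) - γ(k)`. -/
def push (γ : List Pt) (k : ℕ) : List Pt :=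
  γ.set k (pt γ (k - 1) + pt γ (k + 1) - pt γ k)

/-- All points of the path lie in `Δ`. -/
def Inside (Δ : Set Pt) (γ : List Pt) : Prop := ∀ z ∈ γ, z ∈ Δ

/-- Mikhalkin's multiplicity recursion, as a functional relation: `MultRel Δ Init s γ m`
means that the recursion (performed always at the *first* turn of sign `s`) assigns the
multiplicity `m` to the path `γ`.  Here `Δ` is the set of lattice points of the polygon,
`Init` the set of initial paths (of multiplicity `1`), and `s` the turn sign
(`0 < ·` for left turns / `mult₊`, `· < 0` for right turns / `mult₋`). -/
inductive MultRel (Δ : Set Pt) (Init : List Pt → Prop) (s : ℤ → Prop) : List Pt → ℕ → Prop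
  | init {γ : List Pt} : Init γ → MultRel Δ Init s γ 1
  | noTurn {γ : List Pt} : ¬Init γ → (∀ k, ¬TurnAt s γ k) → MultRel Δ Init s γ 0
  | stepIn {γ : List Pt} {k m' m'' : ℕ} : ¬Init γ → FirstTurn s γ k →
      Inside Δ (push γ k) → MultRel Δ Init s (cut γ k) m' →
      MultRel Δ Init s (push γ k) m'' →
      MultRel Δ Init s γ (triArea2 γ k * m' + m'')
  | stepOut {γ : List Pt} {k m' : ℕ} : ¬Init γ → FirstTurn s γ k →
      ¬Inside Δ (push γ k) → MultRel Δ Init s (cut γ k) m' →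
      MultRel Δ Init s γ (triArea2 γ k * m')

/-- The multiplicity function determined by Mikhalkin's recursion. -/
def multOf (Δ : Set Pt) (Init : List Pt → Prop) (s : ℤ → Prop) (γ : List Pt) : ℕ :=
  if h : ∃ m, MultRel Δ Init s γ m then h.choose else 0

/-- `γ ≺ δ`: the path `δ` is obtained from `γ` by finitely many steps of the multiplicity
recursion (each step cuts the corner at the first turn of sign `s`, or completes the
parallelogram there). -/
inductive Reaches (Δ : Set Pt) (Init : List Pt → Prop) (s : ℤ → Prop) : List Pt → List Pt → Prop
  | refl (γ : List Pt) : Reaches Δ Init s γ γ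
  | cutStep {γ δ : List Pt} {k : ℕ} : ¬Init γ → FirstTurn s γ k →
      Reaches Δ Init s (cut γ k) δ → Reaches Δ Init s γ δ
  | pushStep {γ δ : List Pt} {k : ℕ} : ¬Init γ → FirstTurn s γ k →
      Inside Δ (push γ k) → Reaches Δ Init s (push γ k) δ → Reaches Δ Init s γ δ

/-- The lattice path starting at `p` with the given list of step vectors. -/
def pathFrom : Pt → List Pt → List Pt
  | p, [] => [p]
  | p, v :: vs => p :: pathFrom (p + v) vs

/-- Horizontal (rightward) steps of the given sizes. -/
def hSteps (l : List ℕ) : List Pt := l.map fun k => ((k : ℤ), 0)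

/-- Vertical downward steps of the given sizes. -/
def dSteps (l : List ℕ) : List Pt := l.map fun k => ((0 : ℤ), -(k : ℤ))

/-- A multiset of positive integers is a partition of `t`. -/
def IsPartition (m : Multiset ℕ) (t : ℕ) : Prop := (∀ k ∈ m, 0 < k) ∧ m.sum = t

/-! ## The rectangle `[0,c] × [0,d]` -/

/-- The lattice points of the rectangle with vertices `(0,0), (c,0), (0,d), (c,d)`. -/
def rect (c d : ℕ) : Set Pt := {z | 0 ≤ z.1 ∧ z.1 ≤ (c : ℤ) ∧ 0 ≤ z.2 ∧ z.2 ≤ (d : ℤ)}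

/-- `β₊`-initial paths of the rectangle: from `p = (0,d)` clockwise along the top edge with
step sizes the parts of `μ₂` and then down the right edge with step sizes the parts of `ν₂`. -/
def InitPlusRect (d : ℕ) (μ₂ ν₂ : Multiset ℕ) (γ : List Pt) : Prop :=
  ∃ s t : List ℕ, (s : Multiset ℕ) = μ₂ ∧ (t : Multiset ℕ) = ν₂ ∧
    γ = pathFrom (0, (d : ℤ)) (hSteps s ++ dSteps t)

/-- `β₋`-initial paths of the rectangle: from `p = (0,d)` counterclockwise down the left edge
with step sizes the parts of `ν₁` and then along the bottom edge with step sizes the parts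
of `μ₁`. -/
def InitMinusRect (d : ℕ) (μ₁ ν₁ : Multiset ℕ) (γ : List Pt) : Prop :=
  ∃ s t : List ℕ, (s : Multiset ℕ) = ν₁ ∧ (t : Multiset ℕ) = μ₁ ∧
    γ = pathFrom (0, (d : ℤ)) (dSteps s ++ hSteps t)

/-- `mult₊` for the rectangle with boundary data `(μ₁, μ₂, ν₁, ν₂)`. -/
def multPlusRect (c d : ℕ) (μ₂ ν₂ : Multiset ℕ) : List Pt → ℕ :=
  multOf (rect c d) (InitPlusRect d μ₂ ν₂) (fun x => 0 < x)

/-- `mult₋` for the rectangle with boundary data `(μ₁, μ₂, ν₁, ν₂)`. -/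
def multMinusRect (c d : ℕ) (μ₁ ν₁ : Multiset ℕ) : List Pt → ℕ :=
  multOf (rect c d) (InitMinusRect d μ₁ ν₁) (fun x => x < 0)

/-- `mult = mult₊ · mult₋` for the rectangle with boundary data `(μ₁, μ₂, ν₁, ν₂)`. -/
def multRect (c d : ℕ) (μ₁ μ₂ ν₁ ν₂ : Multiset ℕ) (γ : List Pt) : ℕ :=
  multPlusRect c d μ₂ ν₂ γ * multMinusRect c d μ₁ ν₁ γ

/-- A `λ`-increasing lattice path from `(0,d)` to `(c,0)` contained in the rectangle. -/
def IsPathRect (c d : ℕ) (γ : List Pt) : Prop :=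
  Increasing γ ∧ γ.head? = some (0, (d : ℤ)) ∧ γ.getLast? = some ((c : ℤ), 0) ∧
    Inside (rect c d) γ

/-- The genericity condition: all subset sums of the `xᵢ` are distinct. -/
def Generic {n : ℕ} (x : Fin n → ℕ) : Prop :=
  ∀ I J : Finset (Fin n), I ≠ J → ∑ i ∈ I, x i ≠ ∑ j ∈ J, x j


/-! ### Auxiliary infrastructure for the proof -/

private lemma pt_eq_getElem {γ : List Pt} {k : ℕ} (h : k < γ.length) : pt γ k = γ[k] := by
  simp [pt, List.getD_eq_getElem?_getD, List.getElem?_eq_getElem h]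

private lemma lamLT_trans {p q r : Pt} (h1 : lamLT p q) (h2 : lamLT q r) : lamLT p r := by
  unfold lamLT at *; omega

private lemma increasing_iff {γ : List Pt} :
    Increasing γ ↔ ∀ k, k + 1 < γ.length → lamLT (pt γ k) (pt γ (k + 1)) := by
  unfold Increasing
  rw [List.Chain', List.isChain_iff_getElem]
  constructor
  · intro h k hk
    have := h k (by omega)
    rwa [pt_eq_getElem (by omega : k < γ.length), pt_eq_getElem hk]
  · intro h i hi
    have := h i (by omega)
    rwa [pt_eq_getElem (by omega : i < γ.length),
      pt_eq_getElem (by omega : i + 1 < γ.length)] at this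

private lemma length_cut {γ : List Pt} {k : ℕ} (h : k < γ.length) :
    (cut γ k).length = γ.length - 1 := by
  simp [cut, List.length_eraseIdx, h]

private lemma pt_cut_of_lt {γ : List Pt} {k j : ℕ} (h : j < k) : pt (cut γ k) j = pt γ j := by
  simp only [pt, cut, List.getD_eq_getElem?_getD, List.getElem?_eraseIdx]
  rw [if_pos h]

private lemma pt_cut_of_ge {γ : List Pt} {k j : ℕ} (h : k ≤ j) :
    pt (cut γ k) j = pt γ (j + 1) := by
  simp only [pt, cut, List.getD_eq_getElem?_getD, List.getElem?_eraseIdx]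
  rw [if_neg (by omega)]

private lemma length_push (γ : List Pt) (k : ℕ) : (push γ k).length = γ.length := by
  simp [push]

private lemma pt_push_of_ne {γ : List Pt} {k j : ℕ} (h : k ≠ j) :
    pt (push γ k) j = pt γ j := by
  simp only [pt, push, List.getD_eq_getElem?_getD, List.getElem?_set]
  rw [if_neg h]

private lemma pt_push_self {γ : List Pt} {k : ℕ} (h : k < γ.length) :
    pt (push γ k) k = pt γ (k - 1) + pt γ (k + 1) - pt γ k := by
  simp only [pt, push, List.getD_eq_getElem?_getD, List.getElem?_set, if_pos rfl, if_pos h,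
    Option.getD_some]
  simp

private lemma mem_iff_pt {γ : List Pt} {z : Pt} :
    z ∈ γ ↔ ∃ k, k < γ.length ∧ pt γ k = z := by
  rw [List.mem_iff_getElem]
  constructor
  · rintro ⟨n, h, rfl⟩; exact ⟨n, h, pt_eq_getElem h⟩
  · rintro ⟨k, hk, rfl⟩; exact ⟨k, hk, (pt_eq_getElem hk).symm⟩

private lemma mem_cut_or {γ : List Pt} {k : ℕ} {z : Pt} (hk1 : 0 < k)
    (hk2 : k + 1 < γ.length) (hz : z ∈ γ) : z ∈ cut γ k ∨ z = pt γ k := by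
  obtain ⟨j, hj, rfl⟩ := mem_iff_pt.1 hz
  rcases lt_trichotomy j k with h | h | h
  · exact Or.inl (mem_iff_pt.2 ⟨j, by rw [length_cut (by omega)]; omega, pt_cut_of_lt h⟩)
  · exact Or.inr (by rw [h])
  · refine Or.inl (mem_iff_pt.2 ⟨j - 1, by rw [length_cut (by omega)]; omega, ?_⟩)
    rw [pt_cut_of_ge (by omega)]
    congr 1
    omega

private lemma mem_push_or {γ : List Pt} {k : ℕ} {z : Pt} (hz : z ∈ γ) :
    z ∈ push γ k ∨ z = pt γ k := by
  obtain ⟨j, hj, rfl⟩ := mem_iff_pt.1 hz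
  by_cases h : k = j
  · exact Or.inr (by rw [h])
  · exact Or.inl (mem_iff_pt.2 ⟨j, by rw [length_push]; omega, pt_push_of_ne h⟩)

private lemma increasing_cut {γ : List Pt} {k : ℕ} (hI : Increasing γ) (hk1 : 0 < k)
    (hk2 : k + 1 < γ.length) : Increasing (cut γ k) := by
  rw [increasing_iff] at hI ⊢
  intro j hj
  rw [length_cut (by omega)] at hj
  rcases lt_trichotomy (j + 1) k with h | h | h
  · rw [pt_cut_of_lt (by omega), pt_cut_of_lt h]
    exact hI j (by omega)
  · rw [pt_cut_of_lt (by omega), pt_cut_of_ge (by omega)]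
    exact lamLT_trans (hI j (by omega)) (hI (j + 1) (by omega))
  · rw [pt_cut_of_ge (by omega), pt_cut_of_ge (by omega)]
    exact hI (j + 1) (by omega)

private lemma increasing_push {γ : List Pt} {k : ℕ} (hI : Increasing γ) (hk1 : 0 < k)
    (hk2 : k + 1 < γ.length) : Increasing (push γ k) := by
  rw [increasing_iff] at hI ⊢
  intro j hj
  rw [length_push] at hj
  rcases eq_or_ne j k with rfl | hjk
  · rw [pt_push_self (by omega), pt_push_of_ne (by omega)]
    have h1 := hI (j - 1) (by omega)
    rw [show j - 1 + 1 = j from by omega] at h1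
    unfold lamLT at h1 ⊢
    simp only [Prod.fst_add, Prod.fst_sub, Prod.snd_add, Prod.snd_sub]
    omega
  · rcases eq_or_ne (j + 1) k with e | h2
    · rw [pt_push_of_ne (by omega), e, pt_push_self (by omega)]
      have h1 := hI k hk2
      rw [show k - 1 = j from by omega]
      unfold lamLT at h1 ⊢
      simp only [Prod.fst_add, Prod.fst_sub, Prod.snd_add, Prod.snd_sub]
      omega
    · rw [pt_push_of_ne (Ne.symm hjk), pt_push_of_ne (Ne.symm h2)]
      exact hI j hj

private lemma inside_cut {Δ : Set Pt} {γ : List Pt} {k : ℕ} (h : Inside Δ γ) :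
    Inside Δ (cut γ k) := fun z hz => h z (List.mem_of_mem_eraseIdx hz)

private lemma inside_pt {c d : ℕ} {γ : List Pt} (h : Inside (rect c d) γ) {j : ℕ}
    (hj : j < γ.length) :
    0 ≤ (pt γ j).1 ∧ (pt γ j).1 ≤ (c : ℤ) ∧ 0 ≤ (pt γ j).2 ∧ (pt γ j).2 ≤ (d : ℤ) :=
  h _ (mem_iff_pt.2 ⟨j, hj, rfl⟩)

/-! ### Arithmetic cores -/

private lemma core_left_right {c a1 a2 b1 b2 c1 c2 : ℤ}
    (hv : b1 < c1 ∨ (b1 = c1 ∧ c2 < b2)) (hw : a1 < b1 ∨ (a1 = b1 ∧ b2 < a2))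
    (hb : b1 = c) (hc1 : c1 ≤ c)
    (hdet : 0 < (b1 - a1) * (c2 - b2) - (b2 - a2) * (c1 - b1)) : False := by
  have e : c1 = b1 := by omega
  rw [e] at hdet
  simp only [sub_self, mul_zero, sub_zero] at hdet
  have hw1 : 0 ≤ b1 - a1 := by omega
  have hc2 : c2 < b2 := by omega
  nlinarith [mul_nonneg hw1 (by omega : (0:ℤ) ≤ b2 - c2)]

private lemma core_bottom_turn {a1 a2 b1 b2 c1 c2 : ℤ}
    (hv : b1 < c1 ∨ (b1 = c1 ∧ c2 < b2)) (hw : a1 < b1 ∨ (a1 = b1 ∧ b2 < a2))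
    (hb : b2 = 0) (ha2 : 0 ≤ a2) (hc2 : 0 ≤ c2)
    (hdet : (b1 - a1) * (c2 - b2) - (b2 - a2) * (c1 - b1) < 0) : False := by
  have hv1 : b1 < c1 := by omega
  have hw1 : 0 ≤ b1 - a1 := by omega
  nlinarith [mul_nonneg hw1 (by omega : (0:ℤ) ≤ c2 - b2),
    mul_nonneg (by omega : (0:ℤ) ≤ a2 - b2) (by omega : (0:ℤ) ≤ c1 - b1)]

private lemma core_bottom {c a1 a2 b1 b2 c1 c2 : ℤ}
    (hv : b1 < c1 ∨ (b1 = c1 ∧ c2 < b2)) (hw : a1 < b1 ∨ (a1 = b1 ∧ b2 < a2))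
    (hdet : 0 < (b1 - a1) * (c2 - b2) - (b2 - a2) * (c1 - b1))
    (ha1 : 0 ≤ a1) (ha2 : 0 ≤ a2) (hc2 : 0 ≤ c2)
    (hP1 : ¬(a2 = 0 ∧ 0 < a1 ∧ a1 < c))
    (hb0 : a2 + c2 - b2 = 0) (hb1 : 0 < a1 + c1 - b1) (hb2 : a1 + c1 - b1 < c) : False := by
  rcases eq_or_lt_of_le ha2 with he | hlt
  · -- a2 = 0, so the out-step is horizontal
    have hv1 : b1 < c1 := by omega
    have ha1' : a1 = 0 := by omega
    have hw2 : 0 ≤ b2 - a2 := by omega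
    have he2 : c2 - b2 = 0 := by omega
    rw [he2] at hdet
    simp only [mul_zero, zero_sub] at hdet
    nlinarith [mul_nonneg hw2 (by omega : (0:ℤ) ≤ c1 - b1)]
  · -- a2 > 0, the out-step goes strictly down
    have hw1 : 0 ≤ b1 - a1 := by omega
    have hw2 : 0 ≤ b2 - a2 := by omega
    rcases hv with h | ⟨h, _⟩
    · nlinarith [mul_nonneg hw1 (by omega : (0:ℤ) ≤ b2 - c2),
        mul_nonneg hw2 (by omega : (0:ℤ) ≤ c1 - b1)]
    · have e : c1 - b1 = 0 := by omega
      rw [e] at hdet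
      simp only [mul_zero, sub_zero] at hdet
      nlinarith [mul_nonneg hw1 (by omega : (0:ℤ) ≤ b2 - c2)]

private lemma core_right {c a1 a2 b1 b2 c1 c2 : ℤ}
    (hv : b1 < c1 ∨ (b1 = c1 ∧ c2 < b2)) (hw : a1 < b1 ∨ (a1 = b1 ∧ b2 < a2))
    (hdet : (b1 - a1) * (c2 - b2) - (b2 - a2) * (c1 - b1) < 0)
    (hc1c : c1 ≤ c) (hb : a1 + c1 - b1 = c) : False := by
  rcases hv with h | ⟨h, _⟩
  · -- b1 < c1, so b1 ≤ a1, hence a1 = b1 and b2 < a2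
    have hw' : a1 = b1 ∧ b2 < a2 := by
      rcases hw with h' | h'
      · omega
      · exact h'
    obtain ⟨e1, h2⟩ := hw'
    have e : b1 - a1 = 0 := by omega
    rw [e] at hdet
    simp only [zero_mul, zero_sub] at hdet
    nlinarith [mul_pos (by omega : (0:ℤ) < a2 - b2) (by omega : (0:ℤ) < c1 - b1)]
  · -- b1 = c1, so a1 = c and hence a1 = b1 = c1: zero determinant
    have e1 : b1 - a1 = 0 := by omega
    have e2 : c1 - b1 = 0 := by omega
    rw [e1, e2] at hdet
    simp at hdet

/-! ### Turn geometry in the rectangle -/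

private lemma no_left_turn_at_right {c d : ℕ} {γ : List Pt} {k : ℕ} (hI : Increasing γ)
    (hin : Inside (rect c d) γ) (hk1 : 0 < k) (hk2 : k + 1 < γ.length)
    (hx : (pt γ k).1 = (c : ℤ)) :
    ¬ (0 < det (pt γ k - pt γ (k - 1)) (pt γ (k + 1) - pt γ k)) := by
  intro hdet
  have hv := increasing_iff.1 hI k hk2
  have hw := increasing_iff.1 hI (k - 1) (by omega)
  rw [show k - 1 + 1 = k from by omega] at hw
  have h3 := inside_pt hin (show k + 1 < γ.length from hk2)
  unfold lamLT at hv hw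
  unfold det at hdet
  simp only [Prod.fst_sub, Prod.snd_sub] at hdet
  exact core_left_right hv hw hx h3.2.1 hdet

private lemma no_right_turn_at_bottom {c d : ℕ} {γ : List Pt} {k : ℕ} (hI : Increasing γ)
    (hin : Inside (rect c d) γ) (hk1 : 0 < k) (hk2 : k + 1 < γ.length)
    (hy : (pt γ k).2 = 0) :
    ¬ (det (pt γ k - pt γ (k - 1)) (pt γ (k + 1) - pt γ k) < 0) := by
  intro hdet
  have hv := increasing_iff.1 hI k hk2
  have hw := increasing_iff.1 hI (k - 1) (by omega)
  rw [show k - 1 + 1 = k from by omega] at hw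
  have h1 := inside_pt hin (show k - 1 < γ.length from by omega)
  have h3 := inside_pt hin (show k + 1 < γ.length from hk2)
  unfold lamLT at hv hw
  unfold det at hdet
  simp only [Prod.fst_sub, Prod.snd_sub] at hdet
  exact core_bottom_turn hv hw hy h1.2.2.1 h3.2.2.1 hdet

private lemma push_no_new_bottom {c d : ℕ} {γ : List Pt} {k : ℕ} (hI : Increasing γ)
    (hin : Inside (rect c d) γ)
    (hP : ∀ z ∈ γ, ¬(z.2 = 0 ∧ 0 < z.1 ∧ z.1 < (c : ℤ)))
    (hk1 : 0 < k) (hk2 : k + 1 < γ.length)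
    (hdet : 0 < det (pt γ k - pt γ (k - 1)) (pt γ (k + 1) - pt γ k)) :
    ¬((pt γ (k - 1) + pt γ (k + 1) - pt γ k).2 = 0 ∧
      0 < (pt γ (k - 1) + pt γ (k + 1) - pt γ k).1 ∧
      (pt γ (k - 1) + pt γ (k + 1) - pt γ k).1 < (c : ℤ)) := by
  rintro ⟨hb0, hb1, hb2⟩
  have hv := increasing_iff.1 hI k hk2
  have hw := increasing_iff.1 hI (k - 1) (by omega)
  rw [show k - 1 + 1 = k from by omega] at hw
  have h1 := inside_pt hin (show k - 1 < γ.length from by omega)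
  have h3 := inside_pt hin (show k + 1 < γ.length from hk2)
  have hP1 := hP _ (mem_iff_pt.2 ⟨k - 1, by omega, rfl⟩)
  unfold lamLT at hv hw
  unfold det at hdet
  simp only [Prod.fst_sub, Prod.snd_sub] at hdet
  simp only [Prod.fst_add, Prod.fst_sub, Prod.snd_add, Prod.snd_sub] at hb0 hb1 hb2
  exact core_bottom hv hw hdet h1.1 h1.2.2.1 h3.2.2.1 hP1 hb0 hb1 hb2

private lemma push_no_new_right {c d : ℕ} {γ : List Pt} {k : ℕ} (hI : Increasing γ)
    (hin : Inside (rect c d) γ) (hk1 : 0 < k) (hk2 : k + 1 < γ.length)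
    (hdet : det (pt γ k - pt γ (k - 1)) (pt γ (k + 1) - pt γ k) < 0) :
    (pt γ (k - 1) + pt γ (k + 1) - pt γ k).1 ≠ (c : ℤ) := by
  intro hb
  have hv := increasing_iff.1 hI k hk2
  have hw := increasing_iff.1 hI (k - 1) (by omega)
  rw [show k - 1 + 1 = k from by omega] at hw
  have h3 := inside_pt hin (show k + 1 < γ.length from hk2)
  unfold lamLT at hv hw
  unfold det at hdet
  simp only [Prod.fst_sub, Prod.snd_sub] at hdet
  simp only [Prod.fst_add, Prod.fst_sub] at hb
  exact core_right hv hw hdet h3.2.1 hb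

/-! ### Initial paths -/

private lemma mem_pathFrom_hd {y : ℤ} {t : ℕ} :
    ∀ (s : List ℕ) (x : ℤ) {z : Pt}, z ∈ pathFrom (x, y) (hSteps s ++ dSteps [t]) →
      z.2 = y ∨ z.2 = y - (t : ℤ) := by
  intro s
  induction s with
  | nil =>
    intro x z hz
    simp only [hSteps, dSteps, List.map_nil, List.nil_append, List.map_cons, pathFrom,
      List.mem_cons, List.mem_singleton, List.not_mem_nil, or_false, List.bind_eq_flatMap,
      List.flatMap_cons, List.flatMap_nil, List.pure_def, List.singleton_append] at hz
    rcases hz with rfl | rfl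
    · exact Or.inl rfl
    · right
      simp
      ring
  | cons a s ih =>
    intro x z hz
    simp only [hSteps, List.map_cons, List.cons_append, pathFrom, List.mem_cons,
      List.bind_eq_flatMap, List.flatMap_cons, List.pure_def, List.singleton_append] at hz
    rcases hz with rfl | hz
    · exact Or.inl rfl
    · have e : ((x, y) + ((a : ℤ), (0 : ℤ)) : Pt) = (x + a, y) := by
        simp [Prod.ext_iff]
      rw [e] at hz
      exact ih (x + a) hz

private lemma mem_pathFrom_vt {x : ℤ} {t : ℕ} :
    ∀ (s : List ℕ) (y : ℤ) {z : Pt}, z ∈ pathFrom (x, y) (dSteps s ++ hSteps [t]) →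
      z.1 = x ∨ z.1 = x + (t : ℤ) := by
  intro s
  induction s with
  | nil =>
    intro y z hz
    simp only [hSteps, dSteps, List.map_nil, List.nil_append, List.map_cons, pathFrom,
      List.mem_cons, List.mem_singleton, List.not_mem_nil, or_false, List.bind_eq_flatMap,
      List.flatMap_cons, List.flatMap_nil, List.pure_def, List.singleton_append] at hz
    rcases hz with rfl | rfl
    · exact Or.inl rfl
    · right; simp
  | cons a s ih =>
    intro y z hz
    simp only [dSteps, List.map_cons, List.cons_append, pathFrom, List.mem_cons,
      List.bind_eq_flatMap, List.flatMap_cons, List.pure_def, List.singleton_append] at hz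
    rcases hz with rfl | hz
    · exact Or.inl rfl
    · have e : ((x, y) + ((0 : ℤ), -(a : ℤ)) : Pt) = (x, y - a) := by
        simp [Prod.ext_iff]; ring
      rw [e] at hz
      exact ih (y - a) hz

private lemma initPlus_snd {d : ℕ} {μ₂ : Multiset ℕ} {γ : List Pt}
    (h : InitPlusRect d μ₂ {d} γ) : ∀ z ∈ γ, z.2 = (d : ℤ) ∨ z.2 = 0 := by
  obtain ⟨s, t, hs, ht, rfl⟩ := h
  rw [Multiset.coe_eq_singleton] at ht
  subst ht
  intro z hz
  rcases mem_pathFrom_hd s 0 hz with h | h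
  · exact Or.inl h
  · right; omega

private lemma initMinus_fst {c d : ℕ} {ν₁ : Multiset ℕ} {γ : List Pt}
    (h : InitMinusRect d {c} ν₁ γ) : ∀ z ∈ γ, z.1 = 0 ∨ z.1 = (c : ℤ) := by
  obtain ⟨s, t, hs, ht, rfl⟩ := h
  rw [Multiset.coe_eq_singleton] at ht
  subst ht
  intro z hz
  rcases mem_pathFrom_vt s (d : ℤ) hz with h | h
  · exact Or.inl h
  · right; omega

/-! ### Nonzero multiplicity -/

private lemma exists_multRel_of_ne_zero {Δ : Set Pt} {Init : List Pt → Prop} {s : ℤ → Prop}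
    {γ : List Pt} (h : multOf Δ Init s γ ≠ 0) : ∃ m, MultRel Δ Init s γ m ∧ m ≠ 0 := by
  unfold multOf at h
  split at h
  · next he => exact ⟨_, he.choose_spec, h⟩
  · exact absurd rfl h

/-! ### Main structural lemmas -/

private lemma multRel_plus_no_right {c d : ℕ} {μ₂ : Multiset ℕ} {γ : List Pt} {m : ℕ}
    (h : MultRel (rect c d) (InitPlusRect d μ₂ {d}) (fun x => 0 < x) γ m) :
    m ≠ 0 → Increasing γ → Inside (rect c d) γ →
    ∀ z ∈ γ, ¬(z.1 = (c : ℤ) ∧ 0 < z.2 ∧ z.2 < (d : ℤ)) := by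
  induction h with
  | @init γ hinit =>
    intro _ _ _ z hz hbad
    rcases initPlus_snd hinit z hz with h | h <;> omega
  | @noTurn γ _ _ => intro hm; exact absurd rfl hm
  | @stepIn γ k m' m'' hni hft hins hcut hpush ihcut ihpush =>
    intro hm hI hin
    obtain ⟨⟨hk1, hk2, hdet⟩, -⟩ := hft
    by_cases hm'' : m'' = 0
    · have hm' : m' ≠ 0 := by rintro rfl; simp [hm''] at hm
      have hres := ihcut hm' (increasing_cut hI hk1 hk2) (inside_cut hin)
      intro z hz hbad
      rcases mem_cut_or hk1 hk2 hz with h | rfl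
      · exact hres z h hbad
      · exact no_left_turn_at_right hI hin hk1 hk2 hbad.1 hdet
    · have hres := ihpush hm'' (increasing_push hI hk1 hk2) hins
      intro z hz hbad
      rcases mem_push_or (k := k) hz with h | rfl
      · exact hres z h hbad
      · exact no_left_turn_at_right hI hin hk1 hk2 hbad.1 hdet
  | @stepOut γ k m' hni hft hnins hcut ihcut =>
    intro hm hI hin
    obtain ⟨⟨hk1, hk2, hdet⟩, -⟩ := hft
    have hm' : m' ≠ 0 := by rintro rfl; simp at hm
    have hres := ihcut hm' (increasing_cut hI hk1 hk2) (inside_cut hin)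
    intro z hz hbad
    rcases mem_cut_or hk1 hk2 hz with h | rfl
    · exact hres z h hbad
    · exact no_left_turn_at_right hI hin hk1 hk2 hbad.1 hdet

private lemma multRel_minus_no_bottom {c d : ℕ} {ν₁ : Multiset ℕ} {γ : List Pt} {m : ℕ}
    (h : MultRel (rect c d) (InitMinusRect d {c} ν₁) (fun x => x < 0) γ m) :
    m ≠ 0 → Increasing γ → Inside (rect c d) γ →
    ∀ z ∈ γ, ¬(z.2 = 0 ∧ 0 < z.1 ∧ z.1 < (c : ℤ)) := by
  induction h with
  | @init γ hinit =>
    intro _ _ _ z hz hbad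
    rcases initMinus_fst hinit z hz with h | h <;> omega
  | @noTurn γ _ _ => intro hm; exact absurd rfl hm
  | @stepIn γ k m' m'' hni hft hins hcut hpush ihcut ihpush =>
    intro hm hI hin
    obtain ⟨⟨hk1, hk2, hdet⟩, -⟩ := hft
    by_cases hm'' : m'' = 0
    · have hm' : m' ≠ 0 := by rintro rfl; simp [hm''] at hm
      have hres := ihcut hm' (increasing_cut hI hk1 hk2) (inside_cut hin)
      intro z hz hbad
      rcases mem_cut_or hk1 hk2 hz with h | rfl
      · exact hres z h hbad
      · exact no_right_turn_at_bottom hI hin hk1 hk2 hbad.1 hdet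
    · have hres := ihpush hm'' (increasing_push hI hk1 hk2) hins
      intro z hz hbad
      rcases mem_push_or (k := k) hz with h | rfl
      · exact hres z h hbad
      · exact no_right_turn_at_bottom hI hin hk1 hk2 hbad.1 hdet
  | @stepOut γ k m' hni hft hnins hcut ihcut =>
    intro hm hI hin
    obtain ⟨⟨hk1, hk2, hdet⟩, -⟩ := hft
    have hm' : m' ≠ 0 := by rintro rfl; simp at hm
    have hres := ihcut hm' (increasing_cut hI hk1 hk2) (inside_cut hin)
    intro z hz hbad
    rcases mem_cut_or hk1 hk2 hz with h | rfl
    · exact hres z h hbad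
    · exact no_right_turn_at_bottom hI hin hk1 hk2 hbad.1 hdet

/-! ### Forward preservation along the recursion -/

private lemma reaches_plus_preserve {c d : ℕ} {Init : List Pt → Prop} {γ δ : List Pt}
    (h : Reaches (rect c d) Init (fun x => 0 < x) γ δ) :
    Increasing γ → Inside (rect c d) γ →
    (∀ z ∈ γ, ¬(z.2 = 0 ∧ 0 < z.1 ∧ z.1 < (c : ℤ))) →
    Increasing δ ∧ Inside (rect c d) δ ∧
      (∀ z ∈ δ, ¬(z.2 = 0 ∧ 0 < z.1 ∧ z.1 < (c : ℤ))) := by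
  induction h with
  | refl γ => exact fun a b c => ⟨a, b, c⟩
  | @cutStep γ δ k hni hft hr ih =>
    intro hI hin hP
    obtain ⟨⟨hk1, hk2, hdet⟩, -⟩ := hft
    exact ih (increasing_cut hI hk1 hk2) (inside_cut hin)
      (fun z hz => hP z (List.mem_of_mem_eraseIdx hz))
  | @pushStep γ δ k hni hft hins hr ih =>
    intro hI hin hP
    obtain ⟨⟨hk1, hk2, hdet⟩, -⟩ := hft
    refine ih (increasing_push hI hk1 hk2) hins ?_
    intro z hz
    rcases List.mem_or_eq_of_mem_set (show z ∈ γ.set k _ from hz) with h | rfl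
    · exact hP z h
    · exact push_no_new_bottom hI hin hP hk1 hk2 hdet

private lemma reaches_minus_preserve {c d : ℕ} {Init : List Pt → Prop} {γ δ : List Pt}
    (h : Reaches (rect c d) Init (fun x => x < 0) γ δ) :
    Increasing γ → Inside (rect c d) γ →
    (∀ z ∈ γ, ¬(z.1 = (c : ℤ) ∧ 0 < z.2 ∧ z.2 < (d : ℤ))) →
    Increasing δ ∧ Inside (rect c d) δ ∧
      (∀ z ∈ δ, ¬(z.1 = (c : ℤ) ∧ 0 < z.2 ∧ z.2 < (d : ℤ))) := by
  induction h with
  | refl γ => exact fun a b c => ⟨a, b, c⟩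
  | @cutStep γ δ k hni hft hr ih =>
    intro hI hin hP
    obtain ⟨⟨hk1, hk2, hdet⟩, -⟩ := hft
    exact ih (increasing_cut hI hk1 hk2) (inside_cut hin)
      (fun z hz => hP z (List.mem_of_mem_eraseIdx hz))
  | @pushStep γ δ k hni hft hins hr ih =>
    intro hI hin hP
    obtain ⟨⟨hk1, hk2, hdet⟩, -⟩ := hft
    refine ih (increasing_push hI hk1 hk2) hins ?_
    intro z hz
    rcases List.mem_or_eq_of_mem_set (show z ∈ γ.set k _ from hz) with h | rfl
    · exact hP z h
    · exact fun hbad => push_no_new_right hI hin hk1 hk2 hdet hbad.1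

/-- In the rectangle with `μ₁ = (c)` and `ν₂ = (d)`, if `mult(γ) ≠ 0` and
`γ′` appears (with nonzero multiplicity) in the recursion computing `mult₊(γ)` or
`mult₋(γ)` (possibly `γ′ = γ`), then `γ′` has no lattice point in the relative interior of
the right or the bottom edge of the rectangle. -/
theorem no_interior_boundary_point_of_reaches (c d : ℕ) (hc : 0 < c) (hd : 0 < d)
    (μ₂ ν₁ : Multiset ℕ) (hμ₂ : IsPartition μ₂ c) (hν₁ : IsPartition ν₁ d)
    (γ γ' : List Pt) (hγ : IsPathRect c d γ)
    (hmult : multRect c d {c} μ₂ ν₁ {d} γ ≠ 0)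
    (h : (Reaches (rect c d) (InitPlusRect d μ₂ {d}) (fun x => 0 < x) γ γ' ∧
            multPlusRect c d μ₂ {d} γ' ≠ 0) ∨
         (Reaches (rect c d) (InitMinusRect d {c} ν₁) (fun x => x < 0) γ γ' ∧
            multMinusRect c d {c} ν₁ γ' ≠ 0)) :
    ∀ z ∈ γ', ¬(z.1 = (c : ℤ) ∧ 0 < z.2 ∧ z.2 < (d : ℤ)) ∧
      ¬(z.2 = 0 ∧ 0 < z.1 ∧ z.1 < (c : ℤ)) := by
  obtain ⟨hI, hhead, hlast, hin⟩ := hγ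
  have hmp : multPlusRect c d μ₂ {d} γ ≠ 0 := fun h0 => hmult (by
    rw [multRect, h0, zero_mul])
  have hmm : multMinusRect c d {c} ν₁ γ ≠ 0 := fun h0 => hmult (by
    rw [multRect, h0, mul_zero])
  rcases h with ⟨hreach, hm'⟩ | ⟨hreach, hm'⟩
  · obtain ⟨mm, hmmR, hmm0⟩ := exists_multRel_of_ne_zero hmm
    have hBγ := multRel_minus_no_bottom hmmR hmm0 hI hin
    obtain ⟨hI', hin', hB'⟩ := reaches_plus_preserve hreach hI hin hBγ
    obtain ⟨m', hR', hm'0⟩ := exists_multRel_of_ne_zero hm'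
    have hR'' := multRel_plus_no_right hR' hm'0 hI' hin'
    exact fun z hz => ⟨hR'' z hz, hB' z hz⟩
  · obtain ⟨mp, hmpR, hmp0⟩ := exists_multRel_of_ne_zero hmp
    have hRγ := multRel_plus_no_right hmpR hmp0 hI hin
    obtain ⟨hI', hin', hR'⟩ := reaches_minus_preserve hreach hI hin hRγ
    obtain ⟨m', hRm, hm'0⟩ := exists_multRel_of_ne_zero hm'
    have hB'' := multRel_minus_no_bottom hRm hm'0 hI' hin'
    exact fun z hz => ⟨hR' z hz, hB'' z hz⟩

end TropPaths
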